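/- Let F satisfy the tangential cone condition on B with constant 0 ≤ c_tc < 1 and ‖F'(x)‖ ≤ c_F on B with c_F > 0, let y, y^δ ∈ Y with ‖y − y^δ‖ ≤ δ, δ > 0, and let τ > (1 + c_tc)/(1 − c_tc). Let p > 1, j_p a duality selection on X, j_q an inverse duality selection with X* p*-smooth with constant G > 0, and j_2 a selection of J_2^Y. Let x_n, z ∈ B with F(z) = y, R_n := F(x_n) − y^δ, and assume ‖R_n‖ > τδ. Put w := j_2(R_n), u* := w ∘ F'(x_n), α := ⟨u*, x_n⟩ − ‖R_n‖², ξ := (δ + c_tc(‖R_n‖ + δ))‖R_n‖. Then ⟨u*, x_n⟩ > α + ξ, ⟨u*, z⟩ ≤ α + ξ, and for t̃ := ((⟨u*, x_n⟩ − (α + ξ))/(G‖u*‖^{p*}))^{p−1} and x̃ := j_q(j_p(x_n) − t̃·u*), one has D_p(x̃, z) ≤ D_p(x_n, z) − ((1 − c_tc − τ^{−1}(1 + c_tc))^p/(p·G^{p−1}·c_F^p))·‖R_n‖^p. -/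

import Mathlib

/-- The Bregman distance associated with a selection `jp` of the duality mapping
`J_p^X`. -/
noncomputable def bregmanDist {X : Type*} [NormedAddCommGroup X] [NormedSpace ℝ X]
    (p : ℝ) (jp : X → StrongDual ℝ X) (x x' : X) : ℝ :=
  (1 / p) * ‖x'‖ ^ p - (1 / p) * ‖x‖ ^ p - jp x (x' - x)

set_option maxHeartbeats 1000000 in
/-- Descent property of one RESESOP step with the current gradient for noisy data:
as long as the discrepancy principle `‖R_n‖ > τδ` is not yet fulfilled, the iterate
lies strictly above the stripe, the exact solution lies below its upper bounding
hyperplane, and projecting onto that hyperplane yields the descent property. -/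
theorem resesop_noisy_data_descent
    {X Y : Type*} [NormedAddCommGroup X] [NormedSpace ℝ X] [CompleteSpace X]
    [NormedAddCommGroup Y] [NormedSpace ℝ Y] [CompleteSpace Y]
    (F : X → Y) (F' : X → X →L[ℝ] Y) (x₀ : X) (ρ : ℝ)
    (hdiff : ∀ x ∈ Metric.ball x₀ ρ, HasFDerivAt F (F' x) x)
    (ctc : ℝ) (hctc0 : 0 ≤ ctc) (hctc1 : ctc < 1)
    (htcc : ∀ x ∈ Metric.ball x₀ ρ, ∀ x' ∈ Metric.ball x₀ ρ,
      ‖F x - F x' - F' x (x - x')‖ ≤ ctc * ‖F x - F x'‖)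
    (cF : ℝ) (hcF : 0 < cF) (hFbd : ∀ x ∈ Metric.ball x₀ ρ, ‖F' x‖ ≤ cF)
    (y yδ : Y) (δ : ℝ) (hδ : 0 < δ) (hnoise : ‖y - yδ‖ ≤ δ)
    (τ : ℝ) (hτ : (1 + ctc) / (1 - ctc) < τ)
    (p q : ℝ) (hp : 1 < p) (hpq : 1 / p + 1 / q = 1)
    (jp : X → StrongDual ℝ X) (jq : StrongDual ℝ X → X)
    (hjp : ∀ v : X, jp v v = ‖v‖ ^ p ∧ ‖jp v‖ = ‖v‖ ^ (p - 1))
    (hinv1 : ∀ xs : StrongDual ℝ X, jp (jq xs) = xs)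
    (hinv2 : ∀ x : X, jq (jp x) = x)
    (G : ℝ) (hG : 0 < G)
    (hsmooth : ∀ xs ys : StrongDual ℝ X,
      (1 / q) * ‖xs - ys‖ ^ q ≤ (1 / q) * ‖xs‖ ^ q - ys (jq xs) + (G / q) * ‖ys‖ ^ q)
    (j2 : Y → StrongDual ℝ Y)
    (hj2 : ∀ v : Y, j2 v v = ‖v‖ ^ 2 ∧ ‖j2 v‖ = ‖v‖)
    (xn z : X) (hxn : xn ∈ Metric.ball x₀ ρ) (hz : z ∈ Metric.ball x₀ ρ)
    (hFz : F z = y) (hRn : τ * δ < ‖F xn - yδ‖)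
    (w : StrongDual ℝ Y) (hw : w = j2 (F xn - yδ))
    (us : StrongDual ℝ X) (hus : us = w.comp (F' xn))
    (α ξ : ℝ) (hα : α = us xn - ‖F xn - yδ‖ ^ 2)
    (hξ : ξ = (δ + ctc * (‖F xn - yδ‖ + δ)) * ‖F xn - yδ‖)
    (t : ℝ) (ht : t = ((us xn - (α + ξ)) / (G * ‖us‖ ^ q)) ^ (p - 1))
    (x' : X) (hx' : x' = jq (jp xn - t • us)) :
    α + ξ < us xn ∧
    us z ≤ α + ξ ∧
    bregmanDist p jp x' z ≤
      bregmanDist p jp xn z -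
        ((1 - ctc - τ⁻¹ * (1 + ctc)) ^ p / (p * G ^ (p - 1) * cF ^ p)) *
          ‖F xn - yδ‖ ^ p := by
  have hτ0 : 0 < τ := lt_trans (div_pos (by linarith) (by linarith)) hτ
  set r : ℝ := ‖F xn - yδ‖ with hr_def
  have hr0 : 0 < r := lt_trans (mul_pos hτ0 hδ) hRn
  have hp0 : (0:ℝ) < p := by linarith
  have hp0' : p ≠ 0 := hp0.ne'
  have h1q : 1/q = 1 - 1/p := by linarith
  have hq0 : (0:ℝ) < q := by
    have h2 : 1/p < 1 := by rw [div_lt_one hp0]; linarith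
    have h : 0 < 1/q := by rw [h1q]; linarith
    exact one_div_pos.mp h
  have hq0' : q ≠ 0 := hq0.ne'
  have hpq2 : (p - 1) * q = p := by
    field_simp at hpq
    linarith [hpq]
  -- κ positivity
  have hτd : 1 + ctc < τ * (1 - ctc) := by
    have := (div_lt_iff₀ (by linarith : (0:ℝ) < 1 - ctc)).mp hτ
    linarith [this]
  have hκ : 0 < 1 - ctc - τ⁻¹ * (1 + ctc) := by
    have h2 : τ⁻¹ * (1 + ctc) < 1 - ctc := by
      rw [inv_mul_eq_div, div_lt_iff₀ hτ0]
      linarith [hτd]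
    linarith
  -- S
  set S : ℝ := us xn - (α + ξ) with hS_def
  have hSval : S = r^2 - ξ := by rw [hS_def, hα]; ring
  have hτinv : δ ≤ τ⁻¹ * r := by
    have h := mul_le_mul_of_nonneg_left hRn.le (inv_nonneg.mpr hτ0.le)
    rwa [inv_mul_cancel_left₀ hτ0.ne'] at h
  have hSlb : (1 - ctc - τ⁻¹ * (1 + ctc)) * r^2 ≤ S := by
    rw [hSval, hξ]
    have key : r^2 - (δ + ctc*(r+δ))*r - (1 - ctc - τ⁻¹*(1+ctc))*r^2
        = (1+ctc)*r*(τ⁻¹*r - δ) := by ring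
    have hnn : 0 ≤ (1+ctc)*r*(τ⁻¹*r - δ) :=
      mul_nonneg (mul_nonneg (by linarith) hr0.le) (by linarith)
    linarith [key, hnn]
  have hS0 : 0 < S :=
    lt_of_lt_of_le (mul_pos hκ (pow_pos hr0 2)) hSlb
  have claim1 : α + ξ < us xn := by rw [hS_def] at hS0; linarith
  -- norms of w
  have hwnorm : ‖w‖ = r := by rw [hw]; exact (hj2 _).2
  have hwR : w (F xn - yδ) = r^2 := by rw [hw]; exact (hj2 _).1
  -- claim 2
  have hFdist : ‖F xn - F z‖ ≤ r + δ := by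
    have he : F xn - F z = (F xn - yδ) + (yδ - y) := by rw [hFz]; abel
    calc ‖F xn - F z‖ = ‖(F xn - yδ) + (yδ - y)‖ := by rw [he]
      _ ≤ ‖F xn - yδ‖ + ‖yδ - y‖ := norm_add_le _ _
      _ ≤ r + δ :=
        add_le_add le_rfl (le_trans (le_of_eq (norm_sub_rev _ _)) hnoise)
  have htcc' : ‖F xn - F z - F' xn (xn - z)‖ ≤ ctc * (r + δ) :=
    le_trans (htcc xn hxn z hz) (mul_le_mul_of_nonneg_left hFdist hctc0)
  have hvec : F' xn (z - xn) + (F xn - yδ)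
      = (F xn - F z - F' xn (xn - z)) + (y - yδ) := by
    rw [hFz, map_sub, map_sub]; abel
  have claim2 : us z ≤ α + ξ := by
    have h1 : us z - us xn = w (F' xn (z - xn)) := by
      rw [hus]
      simp only [ContinuousLinearMap.comp_apply]
      rw [← map_sub w, ← map_sub (F' xn)]
    have h2 : us z - α = w (F' xn (z - xn) + (F xn - yδ)) := by
      rw [map_add, hwR, hα]; linarith [h1]
    have h3 : w (F' xn (z - xn) + (F xn - yδ)) ≤ ξ := by
      rw [hvec]
      set v := (F xn - F z - F' xn (xn - z)) + (y - yδ) with hv_def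
      have hvb : ‖v‖ ≤ ctc * (r + δ) + δ :=
        le_trans (norm_add_le _ _) (add_le_add htcc' hnoise)
      calc w v ≤ |w v| := le_abs_self _
        _ = ‖w v‖ := (Real.norm_eq_abs _).symm
        _ ≤ ‖w‖ * ‖v‖ := w.le_opNorm v
        _ ≤ ‖w‖ * (ctc * (r + δ) + δ) :=
            mul_le_mul_of_nonneg_left hvb (norm_nonneg w)
        _ = ξ := by rw [hwnorm, hξ]; ring
    linarith [h2, h3]
  refine ⟨claim1, claim2, ?_⟩
  -- norm of us
  have hN : 0 < ‖us‖ := by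
    have h1 : us z < us xn := lt_of_le_of_lt claim2 claim1
    have h2 : us ≠ 0 := by
      intro h; rw [h] at h1; simp at h1
    exact norm_pos_iff.mpr h2
  have hNle : ‖us‖ ≤ r * cF := by
    rw [hus]
    calc ‖w.comp (F' xn)‖ ≤ ‖w‖ * ‖F' xn‖ := ContinuousLinearMap.opNorm_comp_le _ _
      _ ≤ r * cF :=
        mul_le_mul hwnorm.le (hFbd xn hxn) (norm_nonneg _) hr0.le
  have hNq : 0 < ‖us‖ ^ q := Real.rpow_pos_of_pos hN q
  have hNp : 0 < ‖us‖ ^ p := Real.rpow_pos_of_pos hN p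
  set A : ℝ := G * ‖us‖ ^ q with hA_def
  have hA : 0 < A := mul_pos hG hNq
  have hGp : 0 < G ^ (p - 1) := Real.rpow_pos_of_pos hG _
  have hAp1 : 0 < A ^ (p - 1) := Real.rpow_pos_of_pos hA _
  have ht_pos : 0 < t := by
    rw [ht]
    exact Real.rpow_pos_of_pos (div_pos hS0 hA) _
  -- Bregman identity
  have hnormjp : ∀ u : X, ‖jp u‖ ^ q = ‖u‖ ^ p := by
    intro u
    rw [(hjp u).2, ← Real.rpow_mul (norm_nonneg u), hpq2]
  have hB : ∀ u : X, bregmanDist p jp u z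
      = (1/p) * ‖z‖ ^ p + (1/q) * ‖jp u‖ ^ q - jp u z := by
    intro u
    simp only [bregmanDist]
    rw [map_sub, (hjp u).1, hnormjp u, h1q]
    ring
  have hjpx' : jp x' = jp xn - t • us := by rw [hx', hinv1]
  -- smoothness
  have hsm := hsmooth (jp xn) (t • us)
  rw [hinv2 xn] at hsm
  simp only [ContinuousLinearMap.smul_apply, smul_eq_mul] at hsm
  have hns : ‖t • us‖ = t * ‖us‖ := by
    rw [norm_smul, Real.norm_eq_abs, abs_of_pos ht_pos]
  rw [hns, Real.mul_rpow ht_pos.le (norm_nonneg us)] at hsm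
  have e1 : jp x' z = jp xn z - t * us z := by
    rw [hjpx']
    simp [ContinuousLinearMap.sub_apply, ContinuousLinearMap.smul_apply, smul_eq_mul]
  have hkey : bregmanDist p jp x' z ≤ bregmanDist p jp xn z
      - t * us xn + (G/q) * (t ^ q * ‖us‖ ^ q) + t * us z := by
    rw [hB x', hB xn, e1, hjpx']
    linarith [hsm]
  -- algebra for the step size
  have ht' : t = S ^ (p-1) / A ^ (p-1) := by
    rw [ht, Real.div_rpow hS0.le hA.le]
  have htS : t * S = S ^ p / A ^ (p-1) := by
    rw [ht', div_mul_eq_mul_div, ← Real.rpow_add_one hS0.ne', sub_add_cancel]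
  have htq : t ^ q = S ^ p / A ^ p := by
    rw [ht, ← Real.rpow_mul (div_nonneg hS0.le hA.le), hpq2,
      Real.div_rpow hS0.le hA.le]
  have hApm : A ^ (p-1) = G ^ (p-1) * ‖us‖ ^ p := by
    rw [hA_def, Real.mul_rpow hG.le hNq.le, ← Real.rpow_mul (norm_nonneg us),
      show q * (p - 1) = p from by linear_combination hpq2]
  have hAfull : A ^ p = A ^ (p-1) * A := by
    rw [← Real.rpow_add_one hA.ne', sub_add_cancel]
  have hAp1' : A ^ (p-1) ≠ 0 := hAp1.ne'
  have hG' : G ≠ 0 := hG.ne'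
  have hNq' : ‖us‖ ^ q ≠ 0 := hNq.ne'
  have hNp' : ‖us‖ ^ p ≠ 0 := hNp.ne'
  have hGp' : G ^ (p-1) ≠ 0 := hGp.ne'
  have hcF' : cF ≠ 0 := hcF.ne'
  have hstep1 : (G/q) * (t ^ q * ‖us‖ ^ q) = (1/q) * (S ^ p / A ^ (p-1)) := by
    rw [htq, hAfull, hA_def]
    field_simp
  have hstep2 : t * S - (G/q) * (t ^ q * ‖us‖ ^ q)
      = (1/p) * (S ^ p / (G ^ (p-1) * ‖us‖ ^ p)) := by
    rw [hstep1, htS, ← hApm, show (1:ℝ)/p = 1 - 1/q from by linarith]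
    ring
  -- final bound
  have hrp : 0 < r ^ p := Real.rpow_pos_of_pos hr0 p
  have hrp' : r ^ p ≠ 0 := hrp.ne'
  have hSp_lb : (1 - ctc - τ⁻¹ * (1 + ctc)) ^ p * (r ^ p * r ^ p) ≤ S ^ p := by
    have h1 : ((1 - ctc - τ⁻¹ * (1 + ctc)) * r^2) ^ p ≤ S ^ p :=
      Real.rpow_le_rpow (by positivity) hSlb hp0.le
    calc (1 - ctc - τ⁻¹ * (1 + ctc)) ^ p * (r ^ p * r ^ p)
        = ((1 - ctc - τ⁻¹ * (1 + ctc)) * r^2) ^ p := by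
          rw [Real.mul_rpow hκ.le (sq_nonneg r), pow_two,
            Real.mul_rpow hr0.le hr0.le]
      _ ≤ S ^ p := h1
  have hNp_ub : ‖us‖ ^ p ≤ r ^ p * cF ^ p := by
    calc ‖us‖ ^ p ≤ (r * cF) ^ p := Real.rpow_le_rpow (norm_nonneg us) hNle hp0.le
      _ = r ^ p * cF ^ p := Real.mul_rpow hr0.le hcF.le
  have hcFp : 0 < cF ^ p := Real.rpow_pos_of_pos hcF p
  have hcFp' : cF ^ p ≠ 0 := hcFp.ne'
  have hdiv : (1 - ctc - τ⁻¹ * (1 + ctc)) ^ p * r ^ p / cF ^ p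
      ≤ S ^ p / ‖us‖ ^ p := by
    rw [show (1 - ctc - τ⁻¹ * (1 + ctc)) ^ p * r ^ p / cF ^ p
        = ((1 - ctc - τ⁻¹ * (1 + ctc)) ^ p * (r ^ p * r ^ p)) / (r ^ p * cF ^ p)
        from by field_simp]
    exact div_le_div₀ (by positivity) hSp_lb hNp hNp_ub
  have hc0 : (0:ℝ) < 1 / (p * G ^ (p-1)) := by positivity
  have hbound : ((1 - ctc - τ⁻¹ * (1 + ctc)) ^ p / (p * G ^ (p-1) * cF ^ p)) * r ^ p
      ≤ (1/p) * (S ^ p / (G ^ (p-1) * ‖us‖ ^ p)) := by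
    calc ((1 - ctc - τ⁻¹ * (1 + ctc)) ^ p / (p * G ^ (p-1) * cF ^ p)) * r ^ p
        = 1 / (p * G ^ (p-1)) * ((1 - ctc - τ⁻¹ * (1 + ctc)) ^ p * r ^ p / cF ^ p) := by
          field_simp
      _ ≤ 1 / (p * G ^ (p-1)) * (S ^ p / ‖us‖ ^ p) :=
          mul_le_mul_of_nonneg_left hdiv hc0.le
      _ = (1/p) * (S ^ p / (G ^ (p-1) * ‖us‖ ^ p)) := by
          rw [one_div_mul_eq_div, one_div_mul_eq_div, div_div, div_div]
          congr 1
          ring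
  have h5 : t * us z ≤ t * (α + ξ) := mul_le_mul_of_nonneg_left claim2 ht_pos.le
  have h6 : t * S = t * us xn - t * (α + ξ) := by rw [hS_def]; ring
  linarith [hkey, h5, h6, hstep2, hbound]
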